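/- Let S_Z = ((X,d),(f_i)_{i∈I},(ρ_i)_{i∈I}) be an orbital fuzzy iterated function system, u ∈ F*_S, and x ∈ [u]^* with associated points w_x, y_x ∈ X such that x, y_x ∈ O(w_x) and u(y_x) = 1. Then for every s in the closure of O(w_x), the sequence Z^[n](δ_s) converges in d_∞ to u_x := lim_n Z^[n](u^x). In particular lim_n Z^[n](δ_x) = u_x. -/

import Mathlib

open Metric Filter Topology Set

/-- The orbit of a point `x` under the family of maps `f i`:
`x` together with all images of `x` under finite compositions of the `f i`. -/
def orbitIFS {X I : Type*} (f : I → X → X) (x : X) : Set X :=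
  ⋃ l : List I, {l.foldr (fun i y => f i y) x}

/-- The fractal (Hutchinson–Barnsley) operator `K ↦ ⋃ i, f i '' K`. -/
def fractalOp {X I : Type*} (f : I → X → X) (K : Set X) : Set X :=
  ⋃ i, f i '' K

/-- Image of a fuzzy set under a map: `f(u)(y) = sup_{x ∈ f⁻¹ y} u x` (0 if empty). -/
noncomputable def fuzzyImage {X : Type*} (g : X → X) (u : X → ℝ) : X → ℝ :=
  fun y => sSup (u '' (g ⁻¹' {y}))

/-- The fuzzy Hutchinson–Barnsley operator `Z(u) = ∨ i, ρ i (f i (u))`. -/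
noncomputable def Zop {X I : Type*} (f : I → X → X) (ρ : I → ℝ → ℝ) (u : X → ℝ) : X → ℝ :=
  fun y => ⨆ i, ρ i (fuzzyImage (f i) u y)

/-- The metric `d_∞(u,v) = sup_{α ∈ (0,1]} h([u]^α, [v]^α)`. -/
noncomputable def dInfty {X : Type*} [MetricSpace X] (u v : X → ℝ) : ℝ :=
  ⨆ α : Ioc (0:ℝ) 1, hausdorffDist {x | (α:ℝ) ≤ u x} {x | (α:ℝ) ≤ v x}

/-- The support of a fuzzy set: the closure of `{x | 0 < u x}`. -/
def fsupp {X : Type*} [MetricSpace X] (u : X → ℝ) : Set X := closure {x | 0 < u x}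

/-- The crisp fuzzy point `δ_s`. -/
def fdelta {X : Type*} [DecidableEq X] (s : X) : X → ℝ := fun t => if t = s then 1 else 0

/-- `u^x` : the restriction of `u` to the closure of the orbit of `w` (zero outside). -/
noncomputable def restrictO {X I : Type*} [MetricSpace X] (f : I → X → X) (u : X → ℝ)
    (w : X) : X → ℝ :=
  (closure (orbitIFS f w)).indicator u

/-- A normal compactly supported fuzzy set (with values in `[0,1]`). -/
def IsFuzzyN {X : Type*} [MetricSpace X] (u : X → ℝ) : Prop :=
  (∀ x, u x ∈ Icc (0:ℝ) 1) ∧ (∃ x, u x = 1) ∧ IsCompact (fsupp u)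

/-- An upper semicontinuous normal compactly supported fuzzy set: membership in `F*_X`. -/
def IsFuzzyStar {X : Type*} [MetricSpace X] (u : X → ℝ) : Prop :=
  IsFuzzyN u ∧ UpperSemicontinuous u

/-- Membership in `F*_S`: for each point of positive membership there is an orbit
containing it together with a point of membership one. -/
def InFS {X I : Type*} [MetricSpace X] (f : I → X → X) (u : X → ℝ) : Prop :=
  IsFuzzyStar u ∧ ∀ x, 0 < u x → ∃ w y, x ∈ orbitIFS f w ∧ y ∈ orbitIFS f w ∧ u y = 1

/-- The orbital contraction condition. -/
def OrbitalContr {X I : Type*} [MetricSpace X] (f : I → X → X) (C : ℝ) : Prop :=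
  ∀ i x, ∀ y ∈ orbitIFS f x, ∀ z ∈ orbitIFS f x, dist (f i y) (f i z) ≤ C * dist y z

/-- An admissible system of grey level maps. -/
def Admissible {I : Type*} (ρ : I → ℝ → ℝ) : Prop :=
  (∀ i, ρ i 0 = 0) ∧ (∀ i, MonotoneOn (ρ i) (Icc (0:ℝ) 1)) ∧
  (∀ i, ∀ t ∈ Icc (0:ℝ) 1, ContinuousWithinAt (ρ i) (Ici t) t) ∧
  (∀ i, ∀ t ∈ Icc (0:ℝ) 1, ρ i t ∈ Icc (0:ℝ) 1) ∧ (∃ j, ρ j 1 = 1)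

set_option linter.unusedSectionVars false
set_option maxHeartbeats 1000000

section AuxStmt6
open Bornology

section A
variable {X I : Type*} [MetricSpace X] [Finite I] [Nonempty I]
variable {f : I → X → X} {C : ℝ} {w : X}

lemma foldr_mem_orbit (f : I → X → X) (w : X) (l : List I) :
    l.foldr (fun i y => f i y) w ∈ orbitIFS f w := mem_iUnion.2 ⟨l, rfl⟩

lemma mem_orbit_self (f : I → X → X) (w : X) : w ∈ orbitIFS f w := foldr_mem_orbit f w []

lemma apply_mem_orbit (i : I) {z : X} (hz : z ∈ orbitIFS f w) : f i z ∈ orbitIFS f w := by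
  rcases mem_iUnion.1 hz with ⟨l, hl⟩
  obtain rfl := mem_singleton_iff.1 hl
  exact foldr_mem_orbit f w (i :: l)

lemma apply_mem_closure_orbit (hcont : ∀ i, Continuous (f i)) (i : I) {z : X}
    (hz : z ∈ closure (orbitIFS f w)) : f i z ∈ closure (orbitIFS f w) := by
  have h1 : f i '' closure (orbitIFS f w) ⊆ closure (f i '' orbitIFS f w) :=
    image_closure_subset_closure_image (hcont i)
  have h2 : f i '' orbitIFS f w ⊆ orbitIFS f w := by
    rintro - ⟨z', hz', rfl⟩; exact apply_mem_orbit i hz'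
  exact closure_mono h2 (h1 ⟨z, hz, rfl⟩)

lemma dist_apply_le (hcont : ∀ i, Continuous (f i)) (horb : OrbitalContr f C) (i : I)
    {y z : X} (hy : y ∈ closure (orbitIFS f w)) (hz : z ∈ closure (orbitIFS f w)) :
    dist (f i y) (f i z) ≤ C * dist y z := by
  have hmem : (y, z) ∈ closure (orbitIFS f w ×ˢ orbitIFS f w) := by
    rw [closure_prod_eq]; exact ⟨hy, hz⟩
  have hcl : IsClosed {p : X × X | dist (f i p.1) (f i p.2) ≤ C * dist p.1 p.2} :=
    isClosed_le (((hcont i).comp continuous_fst).dist ((hcont i).comp continuous_snd))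
      (continuous_const.mul continuous_dist)
  exact closure_minimal (fun p hp => horb i w p.1 hp.1 p.2 hp.2) hcl hmem

lemma orbit_isBounded (hC0 : 0 ≤ C) (hC1 : C < 1) (horb : OrbitalContr f C) (w : X) :
    IsBounded (orbitIFS f w) := by
  obtain ⟨i₀, hi₀⟩ := Finite.exists_max fun i => dist w (f i w)
  set M := dist w (f i₀ w) with hM
  have hM0 : 0 ≤ M := dist_nonneg
  have h1C : 0 < 1 - C := by linarith
  set B := M / (1 - C) with hB
  have hB0 : 0 ≤ B := div_nonneg hM0 h1C.le
  have key : ∀ l : List I, dist w (l.foldr (fun i y => f i y) w) ≤ B := by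
    intro l
    induction l with
    | nil => simpa using hB0
    | cons i l ih =>
      have horb' : dist (f i w) (f i (l.foldr (fun i y => f i y) w)) ≤
          C * dist w (l.foldr (fun i y => f i y) w) :=
        horb i w w (mem_orbit_self f w) _ (foldr_mem_orbit f w l)
      have hCB : C * dist w (l.foldr (fun i y => f i y) w) ≤ C * B :=
        mul_le_mul_of_nonneg_left ih hC0
      have hMB : M + C * B = B := by
        rw [hB]; field_simp; ring
      calc dist w ((i :: l).foldr (fun i y => f i y) w)
          ≤ dist w (f i w) + dist (f i w) (f i (l.foldr (fun i y => f i y) w)) :=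
            dist_triangle _ _ _
        _ ≤ M + C * B := add_le_add (hi₀ i) (horb'.trans hCB)
        _ = B := hMB
  apply (isBounded_closedBall (x := w) (r := B)).subset
  intro p hp
  rcases mem_iUnion.1 hp with ⟨l, hl⟩
  obtain rfl := mem_singleton_iff.1 hl
  rw [mem_closedBall, dist_comm]
  exact key l

end A

section B
variable {X I : Type*} [MetricSpace X] [Finite I] [Nonempty I]
variable {f : I → X → X} {C : ℝ} {ρ : I → ℝ → ℝ} {w : X} {v : X → ℝ}

/-- The property preserved by the fuzzy operator along the orbit of `w`. -/
def GoodF (f : I → X → X) (w : X) (v : X → ℝ) : Prop :=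
  (∀ z, v z ∈ Icc (0:ℝ) 1) ∧ UpperSemicontinuous v ∧ IsCompact (fsupp v) ∧
  {z | 0 < v z} ⊆ closure (orbitIFS f w) ∧ ∃ y ∈ closure (orbitIFS f w), v y = 1

lemma fuzzyImage_mem_Icc (g : X → X) (hv : ∀ z, v z ∈ Icc (0:ℝ) 1) (y : X) :
    fuzzyImage g v y ∈ Icc (0:ℝ) 1 :=
  ⟨Real.sSup_nonneg (by rintro r ⟨z, -, rfl⟩; exact (hv z).1),
   Real.sSup_le (by rintro r ⟨z, -, rfl⟩; exact (hv z).2) zero_le_one⟩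

lemma le_fuzzyImage (g : X → X) (hv : ∀ z, v z ∈ Icc (0:ℝ) 1) (z : X) :
    v z ≤ fuzzyImage g v (g z) :=
  le_csSup ⟨1, by rintro r ⟨z', -, rfl⟩; exact (hv z').2⟩ ⟨z, rfl, rfl⟩

lemma exists_le_of_le_iSup {g : I → ℝ} {α : ℝ} (h : α ≤ ⨆ i, g i) : ∃ i, α ≤ g i := by
  obtain ⟨i₀, hi₀⟩ := Finite.exists_max g
  exact ⟨i₀, h.trans (ciSup_le hi₀)⟩

lemma le_Zop {y : X} {α : ℝ} (i : I) (h : α ≤ ρ i (fuzzyImage (f i) v y)) :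
    α ≤ Zop f ρ v y := by
  unfold Zop
  exact h.trans (le_ciSup (f := fun i => ρ i (fuzzyImage (f i) v y)) (Set.finite_range _).bddAbove i)

lemma Zop_mem_Icc (hρ : Admissible ρ) (hv : ∀ z, v z ∈ Icc (0:ℝ) 1) (y : X) :
    Zop f ρ v y ∈ Icc (0:ℝ) 1 := by
  obtain ⟨hρ0, hmono, hrc, h01, j, hj⟩ := hρ
  refine ⟨?_, ciSup_le fun i => (h01 i _ (fuzzyImage_mem_Icc (f i) hv y)).2⟩
  obtain ⟨i⟩ := ‹Nonempty I›
  exact le_Zop i (h01 i _ (fuzzyImage_mem_Icc (f i) hv y)).1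

lemma pos_of_rho (hρ : Admissible ρ) (i : I) {t α : ℝ} (ht : t ∈ Icc (0:ℝ) 1)
    (hα : 0 < α) (h : α ≤ ρ i t) : 0 < t := by
  rcases ht.1.eq_or_lt with heq | h'
  · exfalso; rw [← heq, hρ.1 i] at h; linarith
  · exact h'

-- level set lemmas
lemma lev_isClosed (hv : GoodF f w v) (α : ℝ) : IsClosed {z | α ≤ v z} :=
  hv.2.1.isClosed_preimage α

lemma lev_subset_supp (hv : GoodF f w v) {α : ℝ} (hα : 0 < α) :
    {z | α ≤ v z} ⊆ fsupp v := fun z hz => subset_closure (lt_of_lt_of_le hα hz)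

lemma lev_isCompact (hv : GoodF f w v) {α : ℝ} (hα : 0 < α) :
    IsCompact {z | α ≤ v z} :=
  hv.2.2.1.of_isClosed_subset (lev_isClosed hv α) (lev_subset_supp hv hα)

lemma lev_subset_closure_orbit (hv : GoodF f w v) {α : ℝ} (hα : 0 < α) :
    {z | α ≤ v z} ⊆ closure (orbitIFS f w) :=
  fun z hz => hv.2.2.2.1 (hα.trans_le hz)

lemma lev_nonempty (hv : GoodF f w v) {α : ℝ} (hα1 : α ≤ 1) :
    {z | α ≤ v z}.Nonempty := by
  obtain ⟨y, -, hy1⟩ := hv.2.2.2.2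
  exact ⟨y, by simp [hy1, hα1]⟩

/-- Attainment of the supremum in `fuzzyImage` for a good fuzzy set. -/
lemma fuzzyImage_attained (hcont : ∀ i, Continuous (f i)) (hv : GoodF f w v) (i : I) {y : X}
    (hpos : 0 < fuzzyImage (f i) v y) :
    ∃ z, f i z = y ∧ v z = fuzzyImage (f i) v y := by
  set t := fuzzyImage (f i) v y with hts
  have hbdd : BddAbove (v '' ((f i) ⁻¹' {y})) :=
    ⟨1, by rintro r ⟨z, -, rfl⟩; exact (hv.1 z).2⟩
  have hKne : ∀ β : Ioo (0:ℝ) t, ((f i) ⁻¹' {y} ∩ {z | (β:ℝ) ≤ v z}).Nonempty := by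
    rintro ⟨β, hβ0, hβt⟩
    have hSne : (v '' ((f i) ⁻¹' {y})).Nonempty := by
      by_contra h
      rw [not_nonempty_iff_eq_empty] at h
      rw [hts] at hpos
      unfold fuzzyImage at hpos
      rw [h, Real.sSup_empty] at hpos
      exact lt_irrefl 0 hpos
    obtain ⟨r, ⟨z, hz, rfl⟩, hr⟩ := exists_lt_of_lt_csSup hSne hβt
    exact ⟨z, hz, hr.le⟩
  have hne : Nonempty (Ioo (0:ℝ) t) := ⟨⟨t/2, by constructor <;> [positivity; linarith]⟩⟩
  have hKcl : ∀ β : Ioo (0:ℝ) t, IsClosed ((f i) ⁻¹' {y} ∩ {z | (β:ℝ) ≤ v z}) :=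
    fun β => (IsClosed.preimage (hcont i) isClosed_singleton).inter (lev_isClosed hv _)
  have hKc : ∀ β : Ioo (0:ℝ) t, IsCompact ((f i) ⁻¹' {y} ∩ {z | (β:ℝ) ≤ v z}) :=
    fun β => (lev_isCompact hv β.2.1).of_isClosed_subset (hKcl β) inter_subset_right
  have hdir : Directed (· ⊇ ·) (fun β : Ioo (0:ℝ) t =>
      (f i) ⁻¹' {y} ∩ {z | (β:ℝ) ≤ v z}) := by
    rintro ⟨a, ha⟩ ⟨b, hb⟩
    rcases le_total a b with h | h
    · exact ⟨⟨b, hb⟩, fun z hz => ⟨hz.1, h.trans hz.2⟩, fun z hz => hz⟩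
    · exact ⟨⟨a, ha⟩, fun z hz => hz, fun z hz => ⟨hz.1, h.trans hz.2⟩⟩
  obtain ⟨z, hz⟩ := IsCompact.nonempty_iInter_of_directed_nonempty_isCompact_isClosed
    _ hdir hKne hKc hKcl
  have hzy : f i z = y := by
    obtain ⟨β⟩ := hne
    exact (mem_iInter.1 hz β).1
  have hzle : v z ≤ t := le_csSup hbdd ⟨z, by simp [hzy], rfl⟩
  have hzge : t ≤ v z := by
    by_contra h
    push_neg at h
    have hv0 : 0 ≤ v z := (hv.1 z).1
    have hβmem : (v z + t) / 2 ∈ Ioo (0:ℝ) t := ⟨by linarith, by linarith⟩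
    have := (mem_iInter.1 hz ⟨_, hβmem⟩).2
    simp only [mem_setOf_eq] at this
    linarith
  exact ⟨z, hzy, le_antisymm hzle hzge⟩



lemma fuzzyImage_pos_exists {g : X → X} {y : X} (hpos : 0 < fuzzyImage g v y) :
    ∃ z, g z = y ∧ 0 < v z := by
  have hSne : (v '' (g ⁻¹' {y})).Nonempty := by
    by_contra h
    rw [not_nonempty_iff_eq_empty] at h
    unfold fuzzyImage at hpos
    rw [h, Real.sSup_empty] at hpos
    exact lt_irrefl 0 hpos
  obtain ⟨r, ⟨z, hz, rfl⟩, hr⟩ := exists_lt_of_lt_csSup hSne hpos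
  exact ⟨z, hz, hr⟩

lemma Zop_lev_isClosed (hcont : ∀ i, Continuous (f i)) (hρ : Admissible ρ)
    (hv : GoodF f w v) {α : ℝ} (hα : 0 < α) :
    IsClosed {y | α ≤ Zop f ρ v y} := by
  obtain ⟨hρ0, hmono, hrc, h01, j, hj⟩ := id hρ
  refine IsSeqClosed.isClosed ?_
  intro ys y hmem hlim
  have h1 : ∀ n, ∃ i, α ≤ ρ i (fuzzyImage (f i) v (ys n)) := fun n =>
    exists_le_of_le_iSup (hmem n)
  have h2 : ∃ i, ∃ᶠ n in atTop, α ≤ ρ i (fuzzyImage (f i) v (ys n)) := by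
    by_contra h
    simp only [not_exists, Filter.not_frequently] at h
    have hev : ∀ᶠ n in atTop, ∀ i : I, ¬ α ≤ ρ i (fuzzyImage (f i) v (ys n)) :=
      eventually_all.2 h
    obtain ⟨n, hn⟩ := hev.exists
    obtain ⟨i, hi⟩ := h1 n
    exact hn i hi
  obtain ⟨i, hfreq⟩ := h2
  obtain ⟨φ, hφmono, hφ⟩ := Filter.extraction_of_frequently_atTop hfreq
  have hFmem : ∀ n, fuzzyImage (f i) v (ys (φ n)) ∈ Icc (0:ℝ) 1 := fun n =>
    fuzzyImage_mem_Icc _ hv.1 _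
  have hFpos : ∀ n, 0 < fuzzyImage (f i) v (ys (φ n)) := fun n =>
    pos_of_rho hρ i (hFmem n) hα (hφ n)
  choose z hzy hzv using fun n => fuzzyImage_attained hcont hv i (hFpos n)
  have hzρ : ∀ n, α ≤ ρ i (v (z n)) := fun n => by rw [hzv n]; exact hφ n
  have hzpos : ∀ n, 0 < v (z n) := fun n => pos_of_rho hρ i (hv.1 _) hα (hzρ n)
  have hzsupp : ∀ n, z n ∈ fsupp v := fun n => subset_closure (hzpos n)
  obtain ⟨zl, hzl, ψ, hψmono, hψlim⟩ := hv.2.2.1.tendsto_subseq hzsupp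
  have hfz : Tendsto (fun n => f i (z (ψ n))) atTop (𝓝 (f i zl)) :=
    ((hcont i).tendsto zl).comp hψlim
  have hylim : Tendsto (fun n => ys (φ (ψ n))) atTop (𝓝 y) :=
    hlim.comp ((hφmono.comp hψmono).tendsto_atTop)
  have hfzy : f i zl = y := by
    have heq : (fun n => f i (z (ψ n))) = fun n => ys (φ (ψ n)) :=
      funext fun n => hzy (ψ n)
    rw [heq] at hfz
    exact tendsto_nhds_unique hfz hylim
  have hvz1 : v zl ∈ Icc (0:ℝ) 1 := hv.1 zl
  have hkey : α ≤ ρ i (v zl) := by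
    rcases hvz1.2.eq_or_lt with h1 | h1
    · calc α ≤ ρ i (v (z (ψ 0))) := hzρ (ψ 0)
        _ ≤ ρ i (v zl) := hmono i (hv.1 _) hvz1 (by rw [h1]; exact (hv.1 _).2)
    · have hall : ∀ t' ∈ Ioc (v zl) 1, α ≤ ρ i t' := by
        intro t' ht'
        have hev : ∀ᶠ n in atTop, v (z (ψ n)) < t' := hψlim.eventually (hv.2.1 zl t' ht'.1)
        obtain ⟨n, hn⟩ := hev.exists
        calc α ≤ ρ i (v (z (ψ n))) := hzρ (ψ n)
          _ ≤ ρ i t' := hmono i (hv.1 _) ⟨(hv.1 (z (ψ n))).1.trans hn.le, ht'.2⟩ hn.le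
      have hne : (𝓝[Ioc (v zl) 1] (v zl)).NeBot := by
        rw [nhdsWithin_Ioc_eq_nhdsGT h1]
        infer_instance
      have htend : Tendsto (ρ i) (𝓝[Ioc (v zl) 1] (v zl)) (𝓝 (ρ i (v zl))) :=
        (hrc i _ hvz1).mono_left (nhdsWithin_mono _ (fun x hx => hx.1.le : Ioc (v zl) 1 ⊆ Ici (v zl)))
      exact ge_of_tendsto htend (eventually_nhdsWithin_of_forall hall)
  have hfin : α ≤ ρ i (fuzzyImage (f i) v y) := by
    have hle : v zl ≤ fuzzyImage (f i) v y := by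
      rw [← hfzy]; exact le_fuzzyImage (f i) hv.1 zl
    calc α ≤ ρ i (v zl) := hkey
      _ ≤ ρ i (fuzzyImage (f i) v y) := hmono i hvz1 (fuzzyImage_mem_Icc _ hv.1 y) hle
  exact le_Zop i hfin

lemma Zop_pos_subset (hρ : Admissible ρ) (hv : GoodF f w v) :
    {y | 0 < Zop f ρ v y} ⊆ ⋃ i, f i '' {z | 0 < v z} := by
  intro y hy
  have hle : Zop f ρ v y ≤ ⨆ i, ρ i (fuzzyImage (f i) v y) := le_of_eq rfl
  obtain ⟨i, hi⟩ := exists_le_of_le_iSup hle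
  have hFpos : 0 < fuzzyImage (f i) v y :=
    pos_of_rho hρ i (fuzzyImage_mem_Icc _ hv.1 y) hy hi
  obtain ⟨z, hzy, hzpos⟩ := fuzzyImage_pos_exists hFpos
  exact mem_iUnion.2 ⟨i, z, hzpos, hzy⟩

lemma GoodF_Zop (hcont : ∀ i, Continuous (f i)) (hρ : Admissible ρ)
    (hv : GoodF f w v) : GoodF f w (Zop f ρ v) := by
  obtain ⟨hρ0, hmono, hrc, h01, j, hj⟩ := id hρ
  refine ⟨Zop_mem_Icc hρ hv.1, ?_, ?_, ?_, ?_⟩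
  · -- usc
    rw [upperSemicontinuous_iff_isClosed_preimage]
    intro c
    by_cases hc : 0 < c
    · exact Zop_lev_isClosed hcont hρ hv hc
    · push_neg at hc
      have : Zop f ρ v ⁻¹' Ici c = univ := by
        ext y
        simp only [mem_preimage, mem_Ici, mem_univ, iff_true]
        exact hc.trans (Zop_mem_Icc hρ hv.1 y).1
      rw [this]; exact isClosed_univ
  · -- compact support
    have hTc : IsCompact (⋃ i, f i '' fsupp v) :=
      isCompact_iUnion fun i => hv.2.2.1.image (hcont i)
    have hsub : {y | 0 < Zop f ρ v y} ⊆ ⋃ i, f i '' fsupp v :=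
      (Zop_pos_subset hρ hv).trans
        (iUnion_mono fun i => image_mono fun z hz => subset_closure hz)
    have hcl : fsupp (Zop f ρ v) ⊆ ⋃ i, f i '' fsupp v :=
      closure_minimal hsub hTc.isClosed
    exact hTc.of_isClosed_subset isClosed_closure hcl
  · -- inside orbit closure
    refine (Zop_pos_subset hρ hv).trans ?_
    refine iUnion_subset fun i => ?_
    rintro - ⟨z, hz, rfl⟩
    exact apply_mem_closure_orbit hcont i (hv.2.2.2.1 hz)
  · -- normality
    obtain ⟨y₀, hy₀o, hy₀1⟩ := hv.2.2.2.2
    have hF1 : fuzzyImage (f j) v (f j y₀) = 1 := by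
      refine le_antisymm (fuzzyImage_mem_Icc (f j) hv.1 _).2 ?_
      rw [← hy₀1]
      exact le_fuzzyImage (f j) hv.1 y₀
    refine ⟨f j y₀, apply_mem_closure_orbit hcont j hy₀o, ?_⟩
    refine le_antisymm (Zop_mem_Icc hρ hv.1 _).2 ?_
    exact le_Zop j (by rw [hF1, hj])


lemma Zop_key (hcont : ∀ i, Continuous (f i)) (horb : OrbitalContr f C) (hC0 : 0 ≤ C)
    (hρ : Admissible ρ) {a b : X → ℝ} (ha : GoodF f w a) (hb : GoodF f w b) {r : ℝ}
    (hlev : ∀ β ∈ Ioc (0:ℝ) 1, hausdorffDist {z | β ≤ a z} {z | β ≤ b z} ≤ r)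
    {α : ℝ} (hα : α ∈ Ioc (0:ℝ) 1) :
    ∀ y ∈ {y | α ≤ Zop f ρ a y}, ∃ y' ∈ {y | α ≤ Zop f ρ b y}, dist y y' ≤ C * r := by
  intro y hy
  obtain ⟨hρ0, hmono, hrc, h01, j, hj⟩ := id hρ
  have hy' : α ≤ ⨆ i, ρ i (fuzzyImage (f i) a y) := hy
  obtain ⟨i, hi⟩ := exists_le_of_le_iSup hy'
  set t := fuzzyImage (f i) a y with hts
  have htmem : t ∈ Icc (0:ℝ) 1 := fuzzyImage_mem_Icc _ ha.1 y
  have htpos : 0 < t := pos_of_rho hρ i htmem hα.1 hi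
  obtain ⟨z, hzy, hzt⟩ := fuzzyImage_attained hcont ha i htpos
  have hzlev : z ∈ {z | t ≤ a z} := by rw [mem_setOf_eq, hzt]
  have hblev_ne : {z | t ≤ b z}.Nonempty := lev_nonempty hb htmem.2
  have halev_ne : {z | t ≤ a z}.Nonempty := ⟨z, hzlev⟩
  have hfin : EMetric.hausdorffEdist {z | t ≤ a z} {z | t ≤ b z} ≠ ⊤ :=
    hausdorffEdist_ne_top_of_nonempty_of_bounded halev_ne hblev_ne
      (lev_isCompact ha htpos).isBounded (lev_isCompact hb htpos).isBounded
  have hinf : infDist z {z | t ≤ b z} ≤ r :=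
    (infDist_le_hausdorffDist_of_mem hzlev hfin).trans (hlev t ⟨htpos, htmem.2⟩)
  obtain ⟨z', hz', hdz⟩ := (lev_isCompact hb htpos).exists_infDist_eq_dist hblev_ne z
  have hdzz : dist z z' ≤ r := by rw [← hdz]; exact hinf
  refine ⟨f i z', ?_, ?_⟩
  · have h1 : t ≤ fuzzyImage (f i) b (f i z') := le_trans hz' (le_fuzzyImage (f i) hb.1 z')
    have h2 : α ≤ ρ i (fuzzyImage (f i) b (f i z')) :=
      hi.trans (hmono i htmem (fuzzyImage_mem_Icc _ hb.1 _) h1)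
    exact le_Zop i h2
  · rw [← hzy]
    calc dist (f i z) (f i z') ≤ C * dist z z' :=
          dist_apply_le hcont horb i (lev_subset_closure_orbit ha htpos hzlev)
            (lev_subset_closure_orbit hb htpos hz')
      _ ≤ C * r := mul_le_mul_of_nonneg_left hdzz hC0

lemma Zop_step (hcont : ∀ i, Continuous (f i)) (horb : OrbitalContr f C) (hC0 : 0 ≤ C)
    (hρ : Admissible ρ) {a b : X → ℝ} (ha : GoodF f w a) (hb : GoodF f w b) {r : ℝ}
    (hr : 0 ≤ r)
    (hlev : ∀ β ∈ Ioc (0:ℝ) 1, hausdorffDist {z | β ≤ a z} {z | β ≤ b z} ≤ r) :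
    ∀ α ∈ Ioc (0:ℝ) 1,
      hausdorffDist {y | α ≤ Zop f ρ a y} {y | α ≤ Zop f ρ b y} ≤ C * r := by
  intro α hα
  have hlev' : ∀ β ∈ Ioc (0:ℝ) 1, hausdorffDist {z | β ≤ b z} {z | β ≤ a z} ≤ r := by
    intro β hβ; rw [hausdorffDist_comm]; exact hlev β hβ
  exact hausdorffDist_le_of_mem_dist (mul_nonneg hC0 hr)
    (Zop_key hcont horb hC0 hρ ha hb hlev hα)
    (Zop_key hcont horb hC0 hρ hb ha hlev' hα)

lemma dInfty_le_of_levels {a b : X → ℝ} (ha : GoodF f w a) (hb : GoodF f w b) (c : X → ℝ)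
    {r : ℝ} (hr : 0 ≤ r)
    (hab : ∀ α ∈ Ioc (0:ℝ) 1, hausdorffDist {z | α ≤ a z} {z | α ≤ b z} ≤ r) :
    dInfty a c ≤ r + dInfty b c := by
  haveI : Nonempty (Ioc (0:ℝ) 1) := ⟨⟨1, by norm_num⟩⟩
  have hfin : ∀ α : Ioc (0:ℝ) 1,
      EMetric.hausdorffEdist {z | (α:ℝ) ≤ a z} {z | (α:ℝ) ≤ b z} ≠ ⊤ := fun α =>
    hausdorffEdist_ne_top_of_nonempty_of_bounded (lev_nonempty ha α.2.2) (lev_nonempty hb α.2.2)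
      (lev_isCompact ha α.2.1).isBounded (lev_isCompact hb α.2.1).isBounded
  set g : Ioc (0:ℝ) 1 → ℝ :=
    fun α => hausdorffDist {z | (α:ℝ) ≤ a z} {z | (α:ℝ) ≤ c z} with hg
  set g' : Ioc (0:ℝ) 1 → ℝ :=
    fun α => hausdorffDist {z | (α:ℝ) ≤ b z} {z | (α:ℝ) ≤ c z} with hg'
  have tri : ∀ α : Ioc (0:ℝ) 1, g α ≤ r + g' α := by
    intro α
    calc g α ≤ hausdorffDist {z | (α:ℝ) ≤ a z} {z | (α:ℝ) ≤ b z} + g' α :=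
          hausdorffDist_triangle (hfin α)
      _ ≤ r + g' α := add_le_add_left (hab α α.2) _
  have tri' : ∀ α : Ioc (0:ℝ) 1, g' α ≤ r + g α := by
    intro α
    have hfin' : EMetric.hausdorffEdist {z | (α:ℝ) ≤ b z} {z | (α:ℝ) ≤ a z} ≠ ⊤ := by
      exact hausdorffEdist_ne_top_of_nonempty_of_bounded (lev_nonempty hb α.2.2) (lev_nonempty ha α.2.2)
        (lev_isCompact hb α.2.1).isBounded (lev_isCompact ha α.2.1).isBounded
    calc g' α ≤ hausdorffDist {z | (α:ℝ) ≤ b z} {z | (α:ℝ) ≤ a z} + g α :=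
          hausdorffDist_triangle hfin'
      _ ≤ r + g α := add_le_add_left (by rw [hausdorffDist_comm]; exact hab α α.2) _
  have hnng : 0 ≤ dInfty b c := Real.iSup_nonneg fun α => hausdorffDist_nonneg
  by_cases hbdd : BddAbove (range g')
  · have h1 : (⨆ α : Ioc (0:ℝ) 1, g α) ≤ r + ⨆ α : Ioc (0:ℝ) 1, g' α :=
      ciSup_le fun α => (tri α).trans (add_le_add_right (le_ciSup hbdd α) r)
    exact h1
  · have hbdd2 : ¬ BddAbove (range g) := by
      rintro ⟨m, hm⟩
      refine hbdd ⟨r + m, ?_⟩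
      rintro - ⟨α, rfl⟩
      exact (tri' α).trans (add_le_add_right (hm ⟨α, rfl⟩) r)
    have h0 : dInfty a c = 0 := Real.iSup_of_not_bddAbove hbdd2
    rw [h0]
    exact add_nonneg hr hnng

lemma fdelta_lev [DecidableEq X] (s : X) {α : ℝ} (hα : 0 < α) (hα1 : α ≤ 1) :
    {z | α ≤ fdelta s z} = {s} := by
  ext z
  simp only [mem_setOf_eq, fdelta, mem_singleton_iff]
  split_ifs with h
  · exact iff_of_true hα1 h
  · exact iff_of_false (by linarith) h

lemma fdelta_pos [DecidableEq X] (s : X) : {z | 0 < fdelta s z} = {s} := by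
  ext z
  simp only [mem_setOf_eq, fdelta, mem_singleton_iff]
  split_ifs with h
  · exact iff_of_true one_pos h
  · exact iff_of_false (by linarith) h

lemma GoodF_fdelta [DecidableEq X] {s : X} (hs : s ∈ closure (orbitIFS f w)) :
    GoodF f w (fdelta s) := by
  refine ⟨?_, ?_, ?_, ?_, s, hs, by simp [fdelta]⟩
  · intro z
    unfold fdelta
    split_ifs <;> constructor <;> norm_num
  · rw [upperSemicontinuous_iff_isClosed_preimage]
    intro c
    by_cases hc : 0 < c
    · by_cases hc1 : c ≤ 1
      · have : fdelta s ⁻¹' Ici c = {s} := fdelta_lev s hc hc1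
        rw [this]; exact isClosed_singleton
      · have : fdelta s ⁻¹' Ici c = ∅ := by
          ext z
          simp only [mem_preimage, mem_Ici, mem_empty_iff_false, iff_false, not_le, fdelta]
          split_ifs <;> linarith
        rw [this]; exact isClosed_empty
    · have : fdelta s ⁻¹' Ici c = univ := by
        ext z
        simp only [mem_preimage, mem_Ici, mem_univ, iff_true, fdelta]
        split_ifs <;> linarith
      rw [this]; exact isClosed_univ
  · unfold fsupp
    rw [fdelta_pos, closure_singleton]
    exact isCompact_singleton
  · rw [fdelta_pos]
    exact singleton_subset_iff.2 hs

lemma GoodF_restrict {u : X → ℝ} (hu01 : ∀ z, u z ∈ Icc (0:ℝ) 1)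
    (husc : UpperSemicontinuous u) (hcomp : IsCompact (fsupp u)) {y0 : X}
    (hy0 : y0 ∈ orbitIFS f w) (hy01 : u y0 = 1) : GoodF f w (restrictO f u w) := by
  have hval : ∀ z, restrictO f u w z ∈ Icc (0:ℝ) 1 := by
    intro z
    by_cases hz : z ∈ closure (orbitIFS f w)
    · rw [restrictO, indicator_of_mem hz]; exact hu01 z
    · rw [restrictO, indicator_of_notMem hz]; constructor <;> norm_num
  have hpos : {z | 0 < restrictO f u w z} ⊆ closure (orbitIFS f w) := by
    intro z hz
    by_contra h
    rw [mem_setOf_eq, restrictO, indicator_of_notMem h] at hz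
    exact lt_irrefl 0 hz
  refine ⟨hval, ?_, ?_, hpos, y0, subset_closure hy0, ?_⟩
  · rw [upperSemicontinuous_iff_isClosed_preimage]
    intro c
    by_cases hc : 0 < c
    · have : restrictO f u w ⁻¹' Ici c = closure (orbitIFS f w) ∩ {z | c ≤ u z} := by
        ext z
        by_cases hz : z ∈ closure (orbitIFS f w)
        · simp only [mem_preimage, mem_Ici, restrictO, indicator_of_mem hz,
            mem_inter_iff, mem_setOf_eq]
          exact ⟨fun h => ⟨hz, h⟩, fun h => h.2⟩
        · simp only [mem_preimage, mem_Ici, restrictO, indicator_of_notMem hz,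
            mem_inter_iff, mem_setOf_eq]
          exact iff_of_false (by linarith) (fun h => hz h.1)
      rw [this]
      exact isClosed_closure.inter (husc.isClosed_preimage c)
    · have : restrictO f u w ⁻¹' Ici c = univ := by
        ext z
        simp only [mem_preimage, mem_Ici, mem_univ, iff_true]
        exact le_trans (by linarith) (hval z).1
      rw [this]; exact isClosed_univ
  · have hsub : {z | 0 < restrictO f u w z} ⊆ {z | 0 < u z} := by
      intro z hz
      by_cases h : z ∈ closure (orbitIFS f w)
      · rwa [mem_setOf_eq, restrictO, indicator_of_mem h] at hz
      · rw [mem_setOf_eq, restrictO, indicator_of_notMem h] at hz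
        exact absurd hz (lt_irrefl 0)
    exact hcomp.of_isClosed_subset isClosed_closure (closure_mono hsub)
  · rw [restrictO, indicator_of_mem (subset_closure hy0)]
    exact hy01

end B
end AuxStmt6

/-- Proposition 3.1: for every `s ∈ cl(O(w_x))`,
`Z^[n](δ_s) → u_x = lim_n Z^[n](u^x)`. -/
theorem stmt6 {X I : Type*} [MetricSpace X] [CompleteSpace X] [DecidableEq X]
    [Finite I] [Nonempty I]
    (f : I → X → X) (hcont : ∀ i, Continuous (f i))
    (C : ℝ) (hC0 : 0 ≤ C) (hC1 : C < 1) (horb : OrbitalContr f C)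
    (ρ : I → ℝ → ℝ) (hρ : Admissible ρ)
    (u : X → ℝ) (hu : InFS f u)
    (x : X) (hx : 0 < u x)
    (wx yx : X) (hxw : x ∈ orbitIFS f wx) (hyw : yx ∈ orbitIFS f wx) (hy1 : u yx = 1)
    (ux : X → ℝ)
    (hux : Tendsto (fun n => dInfty ((Zop f ρ)^[n] (restrictO f u wx)) ux) atTop (nhds 0)) :
    (∀ s ∈ closure (orbitIFS f wx),
      Tendsto (fun n => dInfty ((Zop f ρ)^[n] (fdelta s)) ux) atTop (nhds 0)) ∧
    Tendsto (fun n => dInfty ((Zop f ρ)^[n] (fdelta x)) ux) atTop (nhds 0) := by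
  classical
  obtain ⟨⟨⟨hu01, hnorm, hucomp⟩, husc⟩, -⟩ := hu
  have hxcl : x ∈ closure (orbitIFS f wx) := subset_closure hxw
  have hBnd : Bornology.IsBounded (closure (orbitIFS f wx)) :=
    (orbit_isBounded hC0 hC1 horb wx).closure
  set D0 := diam (closure (orbitIFS f wx)) with hD0
  have hD00 : 0 ≤ D0 := diam_nonneg
  have hGr : GoodF f wx (restrictO f u wx) := GoodF_restrict hu01 husc hucomp hyw hy1
  have main : ∀ s ∈ closure (orbitIFS f wx),
      Tendsto (fun n => dInfty ((Zop f ρ)^[n] (fdelta s)) ux) atTop (nhds 0) := by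
    intro s hs
    have hGd : GoodF f wx (fdelta s) := GoodF_fdelta hs
    have base : ∀ β ∈ Ioc (0:ℝ) 1,
        hausdorffDist {z | β ≤ fdelta s z} {z | β ≤ restrictO f u wx z} ≤ D0 := by
      intro β hβ
      have hlevδ : {z | β ≤ fdelta s z} = {s} := fdelta_lev s hβ.1 hβ.2
      have h1 : {z | β ≤ fdelta s z}.Nonempty := lev_nonempty hGd hβ.2
      have h2 : {z | β ≤ restrictO f u wx z}.Nonempty := lev_nonempty hGr hβ.2
      have hsubu : {z | β ≤ fdelta s z} ∪ {z | β ≤ restrictO f u wx z} ⊆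
          closure (orbitIFS f wx) := by
        refine union_subset ?_ (lev_subset_closure_orbit hGr hβ.1)
        rw [hlevδ]
        exact singleton_subset_iff.2 hs
      calc hausdorffDist {z | β ≤ fdelta s z} {z | β ≤ restrictO f u wx z}
          ≤ diam ({z | β ≤ fdelta s z} ∪ {z | β ≤ restrictO f u wx z}) :=
            hausdorffDist_le_diam h1 (lev_isCompact hGd hβ.1).isBounded h2
              (lev_isCompact hGr hβ.1).isBounded
        _ ≤ D0 := diam_mono hsubu hBnd
    have ind : ∀ n : ℕ, GoodF f wx ((Zop f ρ)^[n] (fdelta s)) ∧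
        GoodF f wx ((Zop f ρ)^[n] (restrictO f u wx)) ∧
        ∀ α ∈ Ioc (0:ℝ) 1, hausdorffDist {z | α ≤ (Zop f ρ)^[n] (fdelta s) z}
          {z | α ≤ (Zop f ρ)^[n] (restrictO f u wx) z} ≤ C ^ n * D0 := by
      intro n
      induction n with
      | zero =>
        refine ⟨hGd, hGr, ?_⟩
        simpa using base
      | succ n ih =>
        obtain ⟨h1, h2, h3⟩ := ih
        refine ⟨?_, ?_, ?_⟩
        · rw [Function.iterate_succ_apply']; exact GoodF_Zop hcont hρ h1
        · rw [Function.iterate_succ_apply']; exact GoodF_Zop hcont hρ h2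
        · intro α hα
          rw [Function.iterate_succ_apply', Function.iterate_succ_apply']
          have hCn : (0:ℝ) ≤ C ^ n * D0 := by positivity
          have hstep := Zop_step hcont horb hC0 hρ h1 h2 hCn h3 α hα
          have heq : C * (C ^ n * D0) = C ^ (n + 1) * D0 := by ring
          rw [← heq]
          exact hstep
    apply squeeze_zero (g := fun n => C ^ n * D0 + dInfty ((Zop f ρ)^[n] (restrictO f u wx)) ux)
      (fun n => Real.iSup_nonneg fun α => hausdorffDist_nonneg)
      (fun n => dInfty_le_of_levels (ind n).1 (ind n).2.1 ux (by positivity) (ind n).2.2)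
    have h1 : Tendsto (fun n : ℕ => C ^ n * D0) atTop (𝓝 0) := by
      simpa using (tendsto_pow_atTop_nhds_zero_of_lt_one hC0 hC1).mul_const D0
    simpa using h1.add hux
  exact ⟨main, main x hxcl⟩
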